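/- Under the setup of the previous statement, the population anchor-regression coefficient H^γ = Cov(Y_γ, ψ_γ) · Cov(ψ_γ, ψ_γ)⁻¹ satisfies H^γ − B_YX = [Σ^⊥ + γ Σ^∥] · [B_XC Σ_C B_XCᵀ + Σ_X + γ M_X Σ_Z M_Xᵀ]⁻¹, where Σ^⊥ = B_YC Σ_C B_XCᵀ and Σ^∥ = (B_YZ + B_YC B_CZ) Σ_Z M_Xᵀ. -/
import Mathlib

open Matrix

theorem stmt_13 {dz dc dx dy : ℕ}
    (B_CZ : Matrix (Fin dc) (Fin dz) ℝ) (B_XZ : Matrix (Fin dx) (Fin dz) ℝ)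
    (B_XC : Matrix (Fin dx) (Fin dc) ℝ) (B_YZ : Matrix (Fin dy) (Fin dz) ℝ)
    (B_YC : Matrix (Fin dy) (Fin dc) ℝ) (B_YX : Matrix (Fin dy) (Fin dx) ℝ)
    (SigC : Matrix (Fin dc) (Fin dc) ℝ) (SigX : Matrix (Fin dx) (Fin dx) ℝ)
    (SigZ : Matrix (Fin dz) (Fin dz) ℝ)
    (γ : ℝ) (hγ : 0 ≤ γ)
    (M_X : Matrix (Fin dx) (Fin dz) ℝ) (hMX : M_X = B_XZ + B_XC * B_CZ)
    (M_Y : Matrix (Fin dy) (Fin dz) ℝ) (hMY : M_Y = B_YZ + B_YC * B_CZ + B_YX * M_X)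
    (CovPsi : Matrix (Fin dx) (Fin dx) ℝ)
    (hCovPsi : CovPsi = B_XC * SigC * B_XCᵀ + SigX + γ • (M_X * SigZ * M_Xᵀ))
    (CovYPsi : Matrix (Fin dy) (Fin dx) ℝ)
    (hCovYPsi : CovYPsi = (B_YC + B_YX * B_XC) * SigC * B_XCᵀ + B_YX * SigX +
      γ • (M_Y * SigZ * M_Xᵀ))
    (hinv : IsUnit CovPsi.det)
    (Hγ : Matrix (Fin dy) (Fin dx) ℝ) (hHγ : Hγ = CovYPsi * CovPsi⁻¹)
    (SigPerp : Matrix (Fin dy) (Fin dx) ℝ) (hPerp : SigPerp = B_YC * SigC * B_XCᵀ)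
    (SigPar : Matrix (Fin dy) (Fin dx) ℝ)
    (hPar : SigPar = (B_YZ + B_YC * B_CZ) * SigZ * M_Xᵀ) :
    Hγ - B_YX = (SigPerp + γ • SigPar) * CovPsi⁻¹ := by
  have key : CovYPsi - B_YX * CovPsi = SigPerp + γ • SigPar := by
    subst hCovYPsi hCovPsi hPerp hPar hMY
    simp only [Matrix.add_mul, Matrix.mul_add, Matrix.mul_smul, Matrix.smul_mul, smul_add,
      Matrix.mul_assoc]
    abel
  have hB : B_YX = B_YX * CovPsi * CovPsi⁻¹ := by
    rw [Matrix.mul_assoc, Matrix.mul_nonsing_inv _ hinv, Matrix.mul_one]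
  rw [hHγ, hB, ← Matrix.sub_mul, key]
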